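/- For every n ≥ 0, the words φ^n(2) and φ^n(11) agree on their first g_{n+1} - 1 letters and differ at the g_{n+1}-st letter, where g_n = ⌊2^{n+1}/3⌋ and φ is the morphism φ(1)=2, φ(2)=211. -/

import Mathlib

/-- The morphism φ on the alphabet {1,2}: φ(1) = 2, φ(2) = 211. -/
def phi : ℕ → List ℕ
  | 1 => [2]
  | 2 => [2, 1, 1]
  | _ => []

/-- Extension of φ to words by concatenation. -/
def phiW (w : List ℕ) : List ℕ := w.flatMap phi

/-- g_n = ⌊2^(n+1)/3⌋. -/
def g (n : ℕ) : ℕ := 2 ^ (n + 1) / 3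

lemma phiW_append (u v : List ℕ) : phiW (u ++ v) = phiW u ++ phiW v := by
  simp [phiW]

lemma iter_append (n : ℕ) (u v : List ℕ) :
    phiW^[n] (u ++ v) = phiW^[n] u ++ phiW^[n] v := by
  induction n generalizing u v with
  | zero => simp
  | succ n ih => simp [Function.iterate_succ_apply, phiW_append, ih]

lemma iter_two (n : ℕ) :
    phiW^[n + 1] [2] = phiW^[n] [2] ++ (phiW^[n] [1] ++ phiW^[n] [1]) := by
  rw [Function.iterate_succ_apply]
  have h : phiW [2] = [2] ++ ([1] ++ [1]) := by rfl
  rw [h, iter_append, iter_append]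

lemma iter_one (n : ℕ) : phiW^[n + 1] [1] = phiW^[n] [2] := by
  rw [Function.iterate_succ_apply]; rfl

lemma pow2_mod3 (n : ℕ) : 2 ^ (n + 2) % 3 = n % 2 + 1 := by
  induction n with
  | zero => rfl
  | succ n ih =>
      have h : (2:ℕ) ^ (n + 1 + 2) = 2 * 2 ^ (n + 2) := by ring
      rw [h, Nat.mul_mod, ih]
      rcases Nat.mod_two_eq_zero_or_one n with hp | hp <;>
        · have hp' : (n + 1) % 2 = 1 - n % 2 := by omega
          rw [hp', hp]
  -- end

lemma three_g (n : ℕ) : 3 * g (n + 1) + n % 2 + 1 = 2 ^ (n + 2) := by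
  have h1 := pow2_mod3 n
  have h2 := Nat.div_add_mod (2 ^ (n + 2)) 3
  have e : g (n + 1) = 2 ^ (n + 2) / 3 := rfl
  omega

lemma g_rec (n : ℕ) : g (n + 2) = 2 * g (n + 1) + n % 2 := by
  have a := three_g n
  have b := three_g (n + 1)
  simp only [show n + 1 + 1 = n + 2 from rfl] at b
  have e : (2:ℕ) ^ (n + 1 + 2) = 2 * 2 ^ (n + 2) := by ring
  rw [e] at b
  omega

lemma g_pos (n : ℕ) : 1 ≤ g (n + 1) := by
  have h := three_g n
  have h4 : 4 ≤ 2 ^ (n + 2) := by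
    calc (4:ℕ) = 2 ^ 2 := by norm_num
    _ ≤ 2 ^ (n + 2) := Nat.pow_le_pow_right (by norm_num) (by omega)
  omega

lemma key (n : ℕ) :
    (phiW^[n] [2]).length = g (n + 1) + n % 2 ∧
    (phiW^[n] [1] ++ phiW^[n] [1]).length = g (n + 1) + (n + 1) % 2 ∧
    (phiW^[n] [2]).take (g (n + 1) - 1) =
      (phiW^[n] [1] ++ phiW^[n] [1]).take (g (n + 1) - 1) ∧
    (phiW^[n] [2])[g (n + 1) - 1]? = some (if n % 2 = 0 then 2 else 1) ∧
    (phiW^[n] [1] ++ phiW^[n] [1])[g (n + 1) - 1]? = some (if n % 2 = 0 then 1 else 2) := by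
  induction n with
  | zero => refine ⟨rfl, rfl, rfl, rfl, rfl⟩
  | succ n ih =>
      obtain ⟨hlB, hlA, htake, hgB, hgA⟩ := ih
      have hp := g_pos n
      have hrec := g_rec n
      simp only [show n + 1 + 1 = n + 2 from rfl]
      have hidx : g (n + 2) - 1 = (phiW^[n] [2]).length + (g (n + 1) - 1) := by omega
      have hB : phiW^[n + 1] [2] = phiW^[n] [2] ++ (phiW^[n] [1] ++ phiW^[n] [1]) :=
        iter_two n
      have hA : phiW^[n + 1] [1] ++ phiW^[n + 1] [1] = phiW^[n] [2] ++ phiW^[n] [2] := by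
        rw [iter_one]
      refine ⟨?_, ?_, ?_, ?_, ?_⟩
      · rw [hB]; simp only [List.length_append] at hlA ⊢; omega
      · rw [hA]; simp only [List.length_append]; omega
      · rw [hB, hA, hidx, List.take_length_add_append, List.take_length_add_append, htake]
      · rw [hB, hidx, List.getElem?_append_right (Nat.le_add_right _ _),
          Nat.add_sub_cancel_left, hgA]
        rcases Nat.mod_two_eq_zero_or_one n with hq | hq <;>
          · have hq' : (n + 1) % 2 = 1 - n % 2 := by omega
            rw [hq', hq]; norm_num
      · rw [hA, hidx, List.getElem?_append_right (Nat.le_add_right _ _),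
          Nat.add_sub_cancel_left, hgB]
        rcases Nat.mod_two_eq_zero_or_one n with hq | hq <;>
          · have hq' : (n + 1) % 2 = 1 - n % 2 := by omega
            rw [hq', hq]; norm_num

theorem phi_two_eleven_agree (n : ℕ) :
    (phiW^[n] [2]).take (g (n + 1) - 1) = (phiW^[n] [1, 1]).take (g (n + 1) - 1) ∧
      (phiW^[n] [2])[g (n + 1) - 1]? ≠ (phiW^[n] [1, 1])[g (n + 1) - 1]? := by
  have h11 : phiW^[n] [1, 1] = phiW^[n] [1] ++ phiW^[n] [1] := by
    have e : ([1, 1] : List ℕ) = [1] ++ [1] := rfl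
    rw [e, iter_append]
  obtain ⟨_, _, htake, hgB, hgA⟩ := key n
  refine ⟨by rw [h11]; exact htake, ?_⟩
  rw [h11, hgB, hgA]
  rcases Nat.mod_two_eq_zero_or_one n with h | h <;> simp [h]
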